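/- Let l ≥ 0 be an integer and let z, w ∈ ℂ be arbitrary. Then the coefficient of the monomial ζ^l ω^l in the homogeneous polynomial (zζ+wω)^l·(−conj(w)ζ+conj(z)ω)^l (a polynomial in the two variables ζ, ω) equals Σ_{i=0}^{l} (−1)^i · (binom(l,i))² · |z|^{2(l−i)} · |w|^{2i}. -/

import Mathlib

open MvPolynomial


lemma mono_eq (k m : ℕ) (c : ℂ) :
    (monomial (Finsupp.single 0 k + Finsupp.single 1 m) c : MvPolynomial (Fin 2) ℂ)
      = C c * X 0 ^ k * X 1 ^ m := by
  simp [X_pow_eq_monomial, monomial_mul, C_mul_monomial]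

lemma expand (a b : ℂ) (l : ℕ) :
    (C a * X (0 : Fin 2) + C b * X 1) ^ l =
      ∑ k ∈ Finset.range (l + 1),
        monomial (Finsupp.single 0 k + Finsupp.single 1 (l - k))
          (a ^ k * b ^ (l - k) * l.choose k) := by
  rw [add_pow]
  refine Finset.sum_congr rfl fun k _ => ?_
  rw [mono_eq, mul_pow, mul_pow]
  simp [C_mul, C_pow, map_natCast]
  ring

lemma key (l k m : ℕ) (hk : k ≤ l) (hm : m ≤ l) :
    (Finsupp.single 0 k + Finsupp.single 1 (l - k) +
      (Finsupp.single 0 m + Finsupp.single 1 (l - m)) : Fin 2 →₀ ℕ) =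
      Finsupp.single 0 l + Finsupp.single 1 l ↔ m = l - k := by
  rw [Finsupp.ext_iff]
  constructor
  · intro h
    have h0 := h 0
    simp [Finsupp.single_apply, Fin.ext_iff] at h0
    omega
  · intro h a
    have h0 : k + m = l := by omega
    fin_cases a <;> simp [Finsupp.single_apply, Fin.ext_iff] <;> omega

lemma abs_pow2 (z : ℂ) (k : ℕ) :
    ((‖z‖ : ℝ) : ℂ) ^ (2 * k) = z ^ k * (starRingEnd ℂ z) ^ k := by
  rw [pow_mul, ← mul_pow, Complex.mul_conj]
  norm_cast
  rw [Complex.sq_norm]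

/-- The coefficient of `ζ^l ω^l` in `(zζ+wω)^l (−conj(w)ζ+conj(z)ω)^l` equals
`∑_{i=0}^{l} (−1)^i (binom(l,i))² |z|^{2(l−i)} |w|^{2i}`. -/
theorem stmt5 (l : ℕ) (z w : ℂ) :
    MvPolynomial.coeff
        ((Finsupp.single 0 l + Finsupp.single 1 l : Fin 2 →₀ ℕ))
        ((MvPolynomial.C z * MvPolynomial.X (0 : Fin 2) +
              MvPolynomial.C w * MvPolynomial.X 1) ^ l *
          (MvPolynomial.C (-(starRingEnd ℂ w)) * MvPolynomial.X 0 +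
              MvPolynomial.C (starRingEnd ℂ z) * MvPolynomial.X 1) ^ l) =
      ∑ i ∈ Finset.range (l + 1),
        (-1 : ℂ) ^ i * (l.choose i : ℂ) ^ 2 *
          ((‖z‖ : ℝ) : ℂ) ^ (2 * (l - i)) * ((‖w‖ : ℝ) : ℂ) ^ (2 * i) := by
  rw [_root_.expand, _root_.expand, Finset.sum_mul_sum]
  simp only [monomial_mul, MvPolynomial.coeff_sum, coeff_monomial]
  conv_rhs => rw [← Finset.sum_range_reflect]
  refine Finset.sum_congr rfl fun k hk => ?_
  rw [Finset.mem_range] at hk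
  have hk' : k ≤ l := by omega
  rw [Finset.sum_congr rfl fun m hm => if_congr
      (key l k m hk' (by rw [Finset.mem_range] at hm; omega)) rfl rfl,
    Finset.sum_ite_eq' (Finset.range (l + 1)) (l - k)]
  rw [if_pos (by rw [Finset.mem_range]; omega)]
  have h1 : l - (l - k) = k := by omega
  have h2 : l + 1 - 1 - k = l - k := by omega
  rw [h1, h2, Nat.choose_symm hk', abs_pow2, abs_pow2, neg_pow]
  rw [h1]
  ring
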